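/- Let C ⊆ (Z/kZ)^n be a linear code and 𝒞 = C × C^⊥ its CSS code. Then the Construction A lattice Λ(𝒞) ⊆ R^{2n} is even and self-dual with respect to the off-diagonal Lorentzian form η. -/

import Mathlib

open scoped BigOperators

/-- Real off-diagonal Lorentzian form `η(x,y) = Σ (x_i y_{n+i} + y_i x_{n+i})`. -/
noncomputable def etaR {n : ℕ} (x y : (Fin n → ℝ) × (Fin n → ℝ)) : ℝ :=
  ∑ i, (x.1 i * y.2 i + y.1 i * x.2 i)

/-- Construction A lattice of a code `C ⊆ (Z/kZ)^{2n}`, scaled by `1/√k`. -/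
noncomputable def constructionA {n : ℕ} (k : ℕ)
    (C : Set ((Fin n → ZMod k) × (Fin n → ZMod k))) :
    Set ((Fin n → ℝ) × (Fin n → ℝ)) :=
  { x | ∃ u ∈ C, ∃ m₁ m₂ : Fin n → ℤ,
      (∀ i, x.1 i = (((u.1 i).val : ℝ) + k * m₁ i) / Real.sqrt k) ∧
      (∀ i, x.2 i = (((u.2 i).val : ℝ) + k * m₂ i) / Real.sqrt k) }

/-- Dual lattice with respect to `etaR`. -/
noncomputable def dualLattice {n : ℕ} (Λ : Set ((Fin n → ℝ) × (Fin n → ℝ))) :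
    Set ((Fin n → ℝ) × (Fin n → ℝ)) :=
  { y | ∀ x ∈ Λ, ∃ z : ℤ, etaR x y = z }

/-- Lorentzian form in `Z/kZ`. -/
def etaMod {n k : ℕ} (u v : (Fin n → ZMod k) × (Fin n → ZMod k)) : ZMod k :=
  ∑ i, (u.1 i * v.2 i + v.1 i * u.2 i)

/-- Dual code with respect to the Lorentzian form mod `k`. -/
def dualCode {n k : ℕ} (C : Set ((Fin n → ZMod k) × (Fin n → ZMod k))) :
    Set ((Fin n → ZMod k) × (Fin n → ZMod k)) :=
  { v | ∀ u ∈ C, etaMod u v = 0 }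

/-- Integer-lift Lorentzian norm of a codeword. -/
def etaInt {n k : ℕ} (u v : (Fin n → ZMod k) × (Fin n → ZMod k)) : ℤ :=
  ∑ i, (((u.1 i).val : ℤ) * ((v.2 i).val : ℤ) + ((v.1 i).val : ℤ) * ((u.2 i).val : ℤ))

/-- Euclidean dual of a linear code over `Z/kZ`. -/
def euclDual {n k : ℕ} (C : Set (Fin n → ZMod k)) : Set (Fin n → ZMod k) :=
  { b | ∀ a ∈ C, ∑ i, a i * b i = 0 }


lemma zmod_div_exists {k : ℕ} (hk : 0 < k) (a y₀ : ZMod k)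
    (h : ∀ r : ZMod k, r * a = 0 → r * y₀ = 0) : ∃ y : ZMod k, a * y = y₀ := by
  haveI : NeZero k := ⟨hk.ne'⟩
  set α := a.val with hα
  set d := Nat.gcd α k with hd
  have hdk : d ∣ k := Nat.gcd_dvd_right α k
  have hdα : d ∣ α := Nat.gcd_dvd_left α k
  have hd0 : 0 < d := Nat.gcd_pos_of_pos_right α hk
  have hka : ((k / d : ℕ) : ZMod k) * a = 0 := by
    have : ((k / d * α : ℕ) : ZMod k) = 0 := by
      rw [ZMod.natCast_eq_zero_iff]
      exact ⟨α / d, by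
        calc k / d * α = k / d * d * (α / d) := by
              rw [mul_assoc, mul_comm d, Nat.div_mul_cancel hdα]
          _ = k * (α / d) := by rw [Nat.div_mul_cancel hdk]⟩
    rw [Nat.cast_mul] at this
    rwa [show a = ((α : ℕ) : ZMod k) by simp [hα, ZMod.natCast_val, ZMod.cast_id]]
  have hky : ((k / d : ℕ) : ZMod k) * y₀ = 0 := h _ hka
  have hdy : d ∣ y₀.val := by
    have h2 : ((k / d * y₀.val : ℕ) : ZMod k) = 0 := by
      rw [Nat.cast_mul, ZMod.natCast_val, ZMod.cast_id]; exact hky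
    rw [ZMod.natCast_eq_zero_iff] at h2
    obtain ⟨t, ht⟩ := h2
    have hkd0 : 0 < k / d := Nat.div_pos (Nat.le_of_dvd hk hdk) hd0
    refine ⟨t, ?_⟩
    have : k / d * y₀.val = k / d * (d * t) := by
      rw [ht, ← mul_assoc, Nat.div_mul_cancel hdk]
    exact Nat.eq_of_mul_eq_mul_left hkd0 this
  obtain ⟨u, v, huv⟩ : ∃ u v : ℤ, (d : ℤ) = α * u + k * v :=
    ⟨Nat.gcdA α k, Nat.gcdB α k, Nat.gcd_eq_gcd_ab α k⟩
  refine ⟨(u : ZMod k) * ((y₀.val / d : ℕ) : ZMod k), ?_⟩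
  have hau : a * (u : ZMod k) = ((d : ℕ) : ZMod k) := by
    have := congrArg (fun z : ℤ => (z : ZMod k)) huv
    push_cast at this
    rw [ZMod.natCast_self] at this
    simp only [zero_mul, add_zero] at this
    rw [this, show ((α : ℕ) : ZMod k) = a from by simp [hα, ZMod.natCast_val, ZMod.cast_id]]
  rw [← mul_assoc, hau, ← Nat.cast_mul, Nat.mul_div_cancel' hdy, ZMod.natCast_val, ZMod.cast_id]

lemma zmod_baer (k : ℕ) (hk : 0 < k) : Module.Baer (ZMod k) (ZMod k) := by
  haveI : IsPrincipalIdealRing (ZMod k) :=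
    IsPrincipalIdealRing.of_surjective (Int.castRingHom (ZMod k)) ZMod.intCast_surjective
  intro I g
  obtain ⟨a, ha⟩ := (IsPrincipalIdealRing.principal I).principal
  have haI : a ∈ I := by rw [ha]; exact Ideal.mem_span_singleton_self a
  set y₀ := g ⟨a, haI⟩ with hy₀
  have h : ∀ r : ZMod k, r * a = 0 → r * y₀ = 0 := by
    intro r hr
    have h0 : r • (⟨a, haI⟩ : I) = 0 := by
      apply Subtype.ext
      simpa [smul_eq_mul] using hr
    calc r * y₀ = g (r • ⟨a, haI⟩) := by rw [map_smul, smul_eq_mul]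
      _ = 0 := by rw [h0, map_zero]
  obtain ⟨y, hy⟩ := zmod_div_exists hk a y₀ h
  refine ⟨LinearMap.toSpanSingleton (ZMod k) (ZMod k) y, fun x hx => ?_⟩
  obtain ⟨r, hr⟩ := Ideal.mem_span_singleton'.mp (ha ▸ hx)
  have : (⟨x, hx⟩ : I) = r • ⟨a, haI⟩ := by
    apply Subtype.ext; simp [smul_eq_mul, hr]
  rw [this, map_smul, ← hy₀, smul_eq_mul, ← hy, LinearMap.toSpanSingleton_apply, smul_eq_mul,
    ← hr]
  ring

lemma zmod_injective (k : ℕ) (hk : 0 < k) : Module.Injective (ZMod k) (ZMod k) :=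
  (zmod_baer k hk).injective

lemma zmod_exists_functional {k : ℕ} (hk : 0 < k) {Q : Type} [AddCommGroup Q]
    [Module (ZMod k) Q] (q : Q) (hq : q ≠ 0) :
    ∃ φ : Q →ₗ[ZMod k] ZMod k, φ q ≠ 0 := by
  haveI : NeZero k := ⟨hk.ne'⟩
  haveI : IsPrincipalIdealRing (ZMod k) :=
    IsPrincipalIdealRing.of_surjective (Int.castRingHom (ZMod k)) ZMod.intCast_surjective
  -- k > 1
  have hk1 : 1 < k := by
    by_contra h
    have hk1' : k = 1 := by omega
    subst hk1'
    exact hq (by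
      calc q = (1 : ZMod 1) • q := (one_smul _ q).symm
        _ = (0 : ZMod 1) • q := by rw [Subsingleton.elim (1 : ZMod 1) 0]
        _ = 0 := zero_smul _ q)
  haveI : Fact (1 < k) := ⟨hk1⟩
  set f := LinearMap.toSpanSingleton (ZMod k) Q q with hf
  set I := LinearMap.ker f with hI
  obtain ⟨a, ha⟩ := (IsPrincipalIdealRing.principal I).principal
  have hnu : ¬ IsUnit a := by
    intro hu
    have : (1 : ZMod k) ∈ I := by
      rw [ha]
      exact Submodule.mem_span_singleton.mpr
        ⟨↑hu.unit⁻¹, by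
          have h2 := hu.unit.inv_mul
          rw [hu.unit_spec] at h2
          rw [smul_eq_mul]; exact h2⟩
    have : (1 : ZMod k) • q = 0 := this
    rw [one_smul] at this
    exact hq this
  set d := Nat.gcd a.val k with hd
  have hdk : d ∣ k := Nat.gcd_dvd_right _ _
  have hd2 : 2 ≤ d := by
    rcases Nat.eq_zero_or_pos d with h0 | h0
    · exact absurd (Nat.eq_zero_of_gcd_eq_zero_right (hd.symm.trans h0)) hk.ne'
    rcases eq_or_lt_of_le (show 1 ≤ d from h0) with h1 | h1
    · exact absurd (by
        rw [show a = ((a.val : ℕ) : ZMod k) from by simp [ZMod.natCast_val, ZMod.cast_id]]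
        exact (ZMod.isUnit_iff_coprime a.val k).mpr ((h1.trans hd).symm)) hnu
    · omega
  set e : ZMod k := ((k / d : ℕ) : ZMod k) with he
  have he0 : e ≠ 0 := by
    rw [he, Ne, ZMod.natCast_eq_zero_iff]
    intro hdvd
    have h1 : 0 < k / d := Nat.div_pos (Nat.le_of_dvd hk hdk) (by omega)
    have h2 : k / d < k := Nat.div_lt_self hk (by omega)
    exact absurd (Nat.le_of_dvd h1 hdvd) (by omega)
  have hae : a * e = 0 := by
    have : ((a.val * (k / d) : ℕ) : ZMod k) = 0 := by
      rw [ZMod.natCast_eq_zero_iff]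
      refine ⟨a.val / d, ?_⟩
      calc a.val * (k / d) = a.val / d * d * (k / d) := by
            rw [Nat.div_mul_cancel (Nat.gcd_dvd_left _ _)]
        _ = a.val / d * k := by rw [mul_assoc, mul_comm d, Nat.div_mul_cancel hdk, mul_comm]
        _ = k * (a.val / d) := mul_comm _ _
    rw [Nat.cast_mul, ZMod.natCast_val, ZMod.cast_id] at this
    exact this
  set ψ := LinearMap.toSpanSingleton (ZMod k) (ZMod k) e with hψ
  have hIψ : I ≤ LinearMap.ker ψ := by
    intro r hr
    rw [ha] at hr
    obtain ⟨s, hs⟩ := Submodule.mem_span_singleton.mp hr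
    simp only [LinearMap.mem_ker, hψ, LinearMap.toSpanSingleton_apply, smul_eq_mul]
    rw [← hs, smul_eq_mul, mul_assoc, hae, mul_zero]
  have hinj : Function.Injective (I.liftQ f le_rfl) := by
    rw [← LinearMap.ker_eq_bot]
    exact Submodule.ker_liftQ_eq_bot I f le_rfl le_rfl
  obtain ⟨φ, hφ⟩ := (zmod_injective k hk).out (I.liftQ f le_rfl) hinj (I.liftQ ψ hIψ)
  refine ⟨φ, ?_⟩
  have h1 : φ q = e := by
    have := hφ (Submodule.Quotient.mk (1 : ZMod k))
    rw [Submodule.liftQ_apply, Submodule.liftQ_apply] at this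
    simpa [hf, hψ] using this
  rw [h1]; exact he0

lemma euclDual_double {n k : ℕ} (hk : 0 < k) (C : Submodule (ZMod k) (Fin n → ZMod k)) :
    ∀ v ∈ euclDual (euclDual (n := n) (k := k) (C : Set _)), v ∈ C := by
  intro v hv
  by_contra hvC
  have hq : (Submodule.Quotient.mk v : (Fin n → ZMod k) ⧸ C) ≠ 0 := by
    rw [Ne, Submodule.Quotient.mk_eq_zero]; exact hvC
  obtain ⟨φ, hφ⟩ := zmod_exists_functional hk _ hq
  set ψ := φ.comp C.mkQ with hψ
  set b : Fin n → ZMod k := fun i => ψ (Pi.single i 1) with hb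
  have key : ∀ x : Fin n → ZMod k, ψ x = ∑ i, x i * b i := by
    intro x
    conv_lhs => rw [← Finset.univ_sum_single x]
    rw [map_sum]
    refine Finset.sum_congr rfl fun i _ => ?_
    have h3 : Pi.single i (x i) = x i • (Pi.single i (1 : ZMod k) : Fin n → ZMod k) := by
      rw [← Pi.single_smul, smul_eq_mul, mul_one]
    rw [h3, map_smul, smul_eq_mul]
  have hbD : b ∈ euclDual (n := n) (k := k) (C : Set _) := by
    intro a haC
    rw [← key a]
    have h0 : C.mkQ a = 0 := (Submodule.Quotient.mk_eq_zero C).mpr haC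
    rw [hψ, LinearMap.comp_apply, h0, map_zero]
  have h1 := hv b hbD
  have h2 : ψ v = 0 := by
    rw [key v, ← h1]
    exact Finset.sum_congr rfl fun i _ => mul_comm _ _
  exact hφ h2

lemma int_sum_dvd {n k : ℕ} (hk : 0 < k) (a b : Fin n → ZMod k) (m₁ m₂ : Fin n → ℤ)
    (h : ∑ i, a i * b i = 0) :
    (k : ℤ) ∣ ∑ i, ((((a i).val : ℤ) + k * m₁ i) * (((b i).val : ℤ) + k * m₂ i)) := by
  haveI : NeZero k := ⟨hk.ne'⟩
  rw [← ZMod.intCast_zmod_eq_zero_iff_dvd]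
  push_cast
  simp only [ZMod.natCast_self, zero_mul, mul_zero, add_zero, zero_add, ZMod.natCast_val,
    ZMod.cast_id]
  exact h

lemma eta_pair {n k : ℕ} (hk : 0 < k) {x y : (Fin n → ℝ) × (Fin n → ℝ)}
    {u u' : (Fin n → ZMod k) × (Fin n → ZMod k)} {m₁ m₂ m₁' m₂' : Fin n → ℤ}
    (hx1 : ∀ i, x.1 i = (((u.1 i).val : ℝ) + k * m₁ i) / Real.sqrt k)
    (hx2 : ∀ i, x.2 i = (((u.2 i).val : ℝ) + k * m₂ i) / Real.sqrt k)
    (hy1 : ∀ i, y.1 i = (((u'.1 i).val : ℝ) + k * m₁' i) / Real.sqrt k)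
    (hy2 : ∀ i, y.2 i = (((u'.2 i).val : ℝ) + k * m₂' i) / Real.sqrt k) :
    etaR x y =
      ((∑ i, ((((u.1 i).val : ℤ) + k * m₁ i) * (((u'.2 i).val : ℤ) + k * m₂' i))
        + ∑ i, ((((u'.1 i).val : ℤ) + k * m₁' i) * (((u.2 i).val : ℤ) + k * m₂ i)) : ℤ) : ℝ)
        / k := by
  have hs : Real.sqrt k * Real.sqrt k = k := Real.mul_self_sqrt (Nat.cast_nonneg k)
  rw [etaR]
  push_cast
  rw [add_div, Finset.sum_div, Finset.sum_div, ← Finset.sum_add_distrib]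
  refine Finset.sum_congr rfl fun i _ => ?_
  rw [hx1 i, hx2 i, hy1 i, hy2 i, div_mul_div_comm, div_mul_div_comm, hs]

lemma mem_constructionA' {n k : ℕ} {C : Set ((Fin n → ZMod k) × (Fin n → ZMod k))}
    {u} (hu : u ∈ C) (m₁ m₂ : Fin n → ℤ) :
    ((fun i => (((u.1 i).val : ℝ) + k * m₁ i) / Real.sqrt k,
      fun i => (((u.2 i).val : ℝ) + k * m₂ i) / Real.sqrt k) :
      (Fin n → ℝ) × (Fin n → ℝ)) ∈ constructionA k C :=
  ⟨u, hu, m₁, m₂, fun _ => rfl, fun _ => rfl⟩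

theorem css_constructionA_even_self_dual (n k : ℕ) (hk : 0 < k)
    (C : Submodule (ZMod k) (Fin n → ZMod k)) :
    (∀ lam ∈ constructionA (n := n) k
        ((C : Set _) ×ˢ euclDual (n := n) (k := k) (C : Set _)),
      ∃ z : ℤ, etaR lam lam = 2 * z) ∧
    constructionA (n := n) k ((C : Set _) ×ˢ euclDual (n := n) (k := k) (C : Set _)) =
      dualLattice (constructionA (n := n) k
        ((C : Set _) ×ˢ euclDual (n := n) (k := k) (C : Set _))) := by
  haveI : NeZero k := ⟨hk.ne'⟩
  have hk0 : (k : ℝ) ≠ 0 := Nat.cast_ne_zero.mpr hk.ne'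
  constructor
  · rintro lam ⟨u, hu, m₁, m₂, h1, h2⟩
    obtain ⟨z, hz⟩ := int_sum_dvd hk u.1 u.2 m₁ m₂ (hu.2 u.1 hu.1)
    refine ⟨z, ?_⟩
    rw [eta_pair hk h1 h2 h1 h2, hz]
    push_cast
    field_simp
    ring
  · apply Set.Subset.antisymm
    · rintro y ⟨u', hu', m₁', m₂', hy1, hy2⟩ x ⟨u, hu, m₁, m₂, hx1, hx2⟩
      obtain ⟨z1, hz1⟩ := int_sum_dvd hk u.1 u'.2 m₁ m₂' (hu'.2 u.1 hu.1)
      obtain ⟨z2, hz2⟩ := int_sum_dvd hk u'.1 u.2 m₁' m₂ (hu.2 u'.1 hu'.1)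
      refine ⟨z1 + z2, ?_⟩
      rw [eta_pair hk hx1 hx2 hy1 hy2, hz1, hz2]
      push_cast
      field_simp
    · intro y hy
      set sk := Real.sqrt k with hsk
      have hsk0 : 0 < sk := Real.sqrt_pos.mpr (Nat.cast_pos.mpr hk)
      have hs2 : sk * sk = (k : ℝ) := Real.mul_self_sqrt (Nat.cast_nonneg k)
      have h0d : (0 : Fin n → ZMod k) ∈ euclDual (n := n) (k := k) (C : Set _) :=
        fun a _ => by simp
      have h0mem : ((0, 0) : (Fin n → ZMod k) × (Fin n → ZMod k)) ∈
          (C : Set _) ×ˢ euclDual (n := n) (k := k) (C : Set _) := ⟨C.zero_mem, h0d⟩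
      -- Step 1 : y.2 j = d j / sk
      have hstep2 : ∀ j, ∃ z : ℤ, y.2 j = z / sk := by
        intro j
        obtain ⟨z, hz⟩ := hy _ (mem_constructionA' h0mem (Pi.single j 1) 0)
        refine ⟨z, ?_⟩
        rw [etaR] at hz
        simp only [ZMod.val_zero, Nat.cast_zero, Pi.zero_apply, Int.cast_zero, mul_zero,
          add_zero, zero_add, zero_div, mul_zero] at hz
        rw [Finset.sum_eq_single_of_mem j (Finset.mem_univ j)
          (fun i _ hij => by simp [Pi.single_eq_of_ne hij])] at hz
        rw [Pi.single_eq_same] at hz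
        have hdiv : (k : ℝ) * (1 : ℤ) / sk = sk := by
          rw [Int.cast_one, mul_one, hsk, Real.div_sqrt]
        rw [hdiv] at hz
        rw [← hz]
        field_simp
      have hstep1 : ∀ j, ∃ z : ℤ, y.1 j = z / sk := by
        intro j
        obtain ⟨z, hz⟩ := hy _ (mem_constructionA' h0mem 0 (Pi.single j 1))
        refine ⟨z, ?_⟩
        rw [etaR] at hz
        simp only [ZMod.val_zero, Nat.cast_zero, Pi.zero_apply, Int.cast_zero, mul_zero,
          add_zero, zero_add, zero_div, zero_mul] at hz
        rw [Finset.sum_eq_single_of_mem j (Finset.mem_univ j)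
          (fun i _ hij => by simp [Pi.single_eq_of_ne hij])] at hz
        rw [Pi.single_eq_same] at hz
        have hdiv : (k : ℝ) * (1 : ℤ) / sk = sk := by
          rw [Int.cast_one, mul_one, hsk, Real.div_sqrt]
        rw [hdiv] at hz
        rw [← hz]
        field_simp
      choose c hc using hstep1
      choose d hd using hstep2
      set cbar : Fin n → ZMod k := fun i => ((c i : ℤ) : ZMod k) with hcbar
      set dbar : Fin n → ZMod k := fun i => ((d i : ℤ) : ZMod k) with hdbar
      -- pairing with (a, 0) lifts
      have hpair1 : ∀ a : Fin n → ZMod k, a ∈ C →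
          (k : ℤ) ∣ ∑ i, ((a i).val : ℤ) * d i := by
        intro a ha
        obtain ⟨z, hz⟩ := hy _ (mem_constructionA' (C := (C : Set _) ×ˢ euclDual (n := n) (k := k) (C : Set _)) (u := (a, 0)) ⟨ha, h0d⟩ 0 0)
        rw [etaR] at hz
        simp only [ZMod.val_zero, Nat.cast_zero, Pi.zero_apply, Int.cast_zero, mul_zero,
          add_zero, zero_add, zero_div] at hz
        have hsum : ∑ i, ((a i).val : ℝ) / sk * y.2 i
            = ((∑ i, ((a i).val : ℤ) * d i : ℤ) : ℝ) / k := by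
          push_cast
          rw [Finset.sum_div]
          refine Finset.sum_congr rfl fun i _ => ?_
          rw [hd i, div_mul_div_comm, hs2]
        rw [hsum] at hz
        refine ⟨z, ?_⟩
        have : ((∑ i, ((a i).val : ℤ) * d i : ℤ) : ℝ) = ((k * z : ℤ) : ℝ) := by
          rw [div_eq_iff hk0] at hz
          push_cast
          push_cast at hz
          linarith [hz]
        exact_mod_cast this
      have hpair2 : ∀ b : Fin n → ZMod k,
          b ∈ euclDual (n := n) (k := k) (C : Set _) →
          (k : ℤ) ∣ ∑ i, c i * ((b i).val : ℤ) := by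
        intro b hb
        obtain ⟨z, hz⟩ := hy _ (mem_constructionA' (C := (C : Set _) ×ˢ euclDual (n := n) (k := k) (C : Set _)) (u := (0, b)) ⟨C.zero_mem, hb⟩ 0 0)
        rw [etaR] at hz
        simp only [ZMod.val_zero, Nat.cast_zero, Pi.zero_apply, Int.cast_zero, mul_zero,
          add_zero, zero_add, zero_div, zero_mul] at hz
        have hsum : ∑ i, y.1 i * (((b i).val : ℝ) / sk)
            = ((∑ i, c i * ((b i).val : ℤ) : ℤ) : ℝ) / k := by
          push_cast
          rw [Finset.sum_div]
          refine Finset.sum_congr rfl fun i _ => ?_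
          rw [hc i, div_mul_div_comm, hs2]
        rw [hsum] at hz
        refine ⟨z, ?_⟩
        have : ((∑ i, c i * ((b i).val : ℤ) : ℤ) : ℝ) = ((k * z : ℤ) : ℝ) := by
          rw [div_eq_iff hk0] at hz
          push_cast
          push_cast at hz
          linarith [hz]
        exact_mod_cast this
      have hdD : dbar ∈ euclDual (n := n) (k := k) (C : Set _) := by
        intro a ha
        have h1 := hpair1 a ha
        rw [← ZMod.intCast_zmod_eq_zero_iff_dvd] at h1
        push_cast at h1
        simpa [hdbar, ZMod.natCast_val, ZMod.cast_id] using h1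
      have hcC : cbar ∈ C := by
        refine euclDual_double hk C cbar ?_
        intro b hb
        have h1 := hpair2 b hb
        rw [← ZMod.intCast_zmod_eq_zero_iff_dvd] at h1
        push_cast at h1
        have h2 : ∑ i, cbar i * b i = 0 := by
          simpa [hcbar, ZMod.natCast_val, ZMod.cast_id] using h1
        rw [← h2]
        exact Finset.sum_congr rfl fun i _ => mul_comm _ _
      have hcd1 : ∀ i, (k : ℤ) ∣ c i - ((cbar i).val : ℤ) := by
        intro i
        rw [← ZMod.intCast_zmod_eq_zero_iff_dvd]
        push_cast
        simp [hcbar, ZMod.natCast_val, ZMod.cast_id]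
      have hcd2 : ∀ i, (k : ℤ) ∣ d i - ((dbar i).val : ℤ) := by
        intro i
        rw [← ZMod.intCast_zmod_eq_zero_iff_dvd]
        push_cast
        simp [hdbar, ZMod.natCast_val, ZMod.cast_id]
      refine ⟨(cbar, dbar), ⟨hcC, hdD⟩,
        fun i => (c i - ((cbar i).val : ℤ)) / k,
        fun i => (d i - ((dbar i).val : ℤ)) / k, fun i => ?_, fun i => ?_⟩
      · have hint : (((cbar i).val : ℤ) + k * ((c i - ((cbar i).val : ℤ)) / k)) = c i := by
          rw [Int.mul_ediv_cancel' (hcd1 i)]; ring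
        have hre : (((cbar i).val : ℝ) + k * (((c i - ((cbar i).val : ℤ)) / k : ℤ) : ℝ))
            = (c i : ℝ) := by exact_mod_cast congrArg (Int.cast : ℤ → ℝ) hint
        rw [hre]
        exact hc i
      · have hint : (((dbar i).val : ℤ) + k * ((d i - ((dbar i).val : ℤ)) / k)) = d i := by
          rw [Int.mul_ediv_cancel' (hcd2 i)]; ring
        have hre : (((dbar i).val : ℝ) + k * (((d i - ((dbar i).val : ℤ)) / k : ℤ) : ℝ))
            = (d i : ℝ) := by exact_mod_cast congrArg (Int.cast : ℤ → ℝ) hint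
        rw [hre]
        exact hd i
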